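/- Every obligation language is recognized by a deterministic weak Büchi automaton: if L ⊆ Σ^ω is a finite Boolean combination of safety languages and guarantee languages (where a safety language is one whose complement is of the form W·Σ^ω for some W ⊆ Σ*, and a guarantee language is one of the form W·Σ^ω), and each of the constituent safety and guarantee languages is ω-regular, then L is recognized by some deterministic weak Büchi automaton. -/
import Mathlib


/-- A complete deterministic Büchi automaton over alphabet `A` with states `Q`. -/
structure DBA (Q A : Type) where
  init : Q
  step : Q → A → Q
  F : Set Q

namespace DBA

variable {Q A : Type}

/-- Extension of the transition function to finite words. -/
def stepList (M : DBA Q A) : Q → List A → Q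
  | q, [] => q
  | q, a :: u => M.stepList (M.step q a) u

/-- `q` is reachable from `p`. -/
def Reach (M : DBA Q A) (p q : Q) : Prop := ∃ u : List A, M.stepList p u = q

/-- `p` and `q` are in the same strongly connected component. -/
def SameSCC (M : DBA Q A) (p q : Q) : Prop := M.Reach p q ∧ M.Reach q p

/-- `q` lies on a cycle (i.e. its SCC is non-trivial). -/
def OnCycle (M : DBA Q A) (q : Q) : Prop := ∃ u : List A, u ≠ [] ∧ M.stepList q u = q

/-- Weakness: every SCC is entirely accepting or entirely rejecting. -/
def Weak (M : DBA Q A) : Prop := ∀ p q, M.SameSCC p q → (p ∈ M.F ↔ q ∈ M.F)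

/-- The (unique) run on `w` starting in state `q`. -/
def runFrom (M : DBA Q A) (q : Q) (w : ℕ → A) : ℕ → Q
  | 0 => q
  | n + 1 => M.step (M.runFrom q w n) (w n)

/-- Büchi acceptance from state `q`: the run visits `F` infinitely often. -/
def AcceptsFrom (M : DBA Q A) (q : Q) (w : ℕ → A) : Prop :=
  ∀ N, ∃ n, N ≤ n ∧ M.runFrom q w n ∈ M.F

/-- Büchi acceptance from the initial state. -/
def Accepts (M : DBA Q A) (w : ℕ → A) : Prop := M.AcceptsFrom M.init w

/-- The ω-language of state `q`. -/
def LangFrom (M : DBA Q A) (q : Q) : Set (ℕ → A) := {w | M.AcceptsFrom q w}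

/-- The ω-language of the automaton. -/
def Lang (M : DBA Q A) : Set (ℕ → A) := {w | M.Accepts w}

/-- `q` is an accepting sink. -/
def AcceptingSink (M : DBA Q A) (q : Q) : Prop := q ∈ M.F ∧ ∀ a, M.step q a = q

/-- Minimality: all states are reachable and no two distinct states are
language-equivalent. -/
def Minimal (M : DBA Q A) : Prop :=
  (∀ q, M.Reach M.init q) ∧ ∀ p q, M.LangFrom p = M.LangFrom q → p = q

/-- Product automaton with a chosen acceptance set. -/
def prod (M₁ : DBA Q A) {Q₂ : Type} (M₂ : DBA Q₂ A) (Fp : Set (Q × Q₂)) :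
    DBA (Q × Q₂) A :=
  ⟨(M₁.init, M₂.init), fun q a => (M₁.step q.1 a, M₂.step q.2 a), Fp⟩

/-- A ranking in the sense of Löding: constant on SCCs, non-increasing along
transitions, and with parity matching acceptance on states lying on cycles. -/
def IsRanking (M : DBA Q A) (r : Q → ℕ) : Prop :=
  (∀ p q, M.SameSCC p q → r p = r q) ∧
  (∀ q a, r (M.step q a) ≤ r q) ∧
  (∀ q, M.OnCycle q → (Even (r q) ↔ q ∈ M.F))

end DBA

/-- Recognizability by a (finite) deterministic weak Büchi automaton. -/
def DWARecognizable {A : Type} (L : Set (ℕ → A)) : Prop :=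
  ∃ (Q : Type) (_ : Fintype Q) (M : DBA Q A), M.Weak ∧ ∀ w, M.Accepts w ↔ w ∈ L

/-- Nondeterministic Büchi automata. -/
structure NBA (Q A : Type) where
  init : Set Q
  step : Q → A → Set Q
  F : Set Q

/-- Acceptance for nondeterministic Büchi automata. -/
def NBA.Accepts {Q A : Type} (M : NBA Q A) (w : ℕ → A) : Prop :=
  ∃ r : ℕ → Q, r 0 ∈ M.init ∧ (∀ n, r (n + 1) ∈ M.step (r n) (w n)) ∧
    ∀ N, ∃ n, N ≤ n ∧ r n ∈ M.F

/-- ω-regularity: recognizability by a finite nondeterministic Büchi automaton. -/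
def OmegaRegular {A : Type} (L : Set (ℕ → A)) : Prop :=
  ∃ (Q : Type) (_ : Fintype Q) (M : NBA Q A), ∀ w, M.Accepts w ↔ w ∈ L

/-- Guarantee languages: `W·Σ^ω` for a set `W` of finite words. -/
def IsGuaranteeLang {A : Type} (L : Set (ℕ → A)) : Prop :=
  ∃ W : Set (List A), L = {w | ∃ n : ℕ, (List.ofFn fun i : Fin n => w i) ∈ W}

/-- Safety languages: complements of guarantee languages. -/
def IsSafetyLang {A : Type} (L : Set (ℕ → A)) : Prop := IsGuaranteeLang Lᶜ

/-- Finite Boolean combinations (union, intersection, complement) of a family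
of languages. -/
inductive BoolCombOf {α : Type} (B : Set (Set α)) : Set α → Prop
  | base {L} : L ∈ B → BoolCombOf B L
  | compl {L} : BoolCombOf B L → BoolCombOf B Lᶜ
  | union {L₁ L₂} : BoolCombOf B L₁ → BoolCombOf B L₂ → BoolCombOf B (L₁ ∪ L₂)
  | inter {L₁ L₂} : BoolCombOf B L₁ → BoolCombOf B L₂ → BoolCombOf B (L₁ ∩ L₂)

section AuxStmt11

open DBA

variable {Q A : Type}

/- ### Generic DBA lemmas -/

theorem aux_stepList_append (M : DBA Q A) (q : Q) (u v : List A) :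
    M.stepList q (u ++ v) = M.stepList (M.stepList q u) v := by
  induction u generalizing q with
  | nil => rfl
  | cons a u ih => exact ih _

theorem aux_reach_trans (M : DBA Q A) {p q r : Q} (h1 : M.Reach p q) (h2 : M.Reach q r) :
    M.Reach p r := by
  obtain ⟨u, hu⟩ := h1; obtain ⟨v, hv⟩ := h2
  exact ⟨u ++ v, by rw [aux_stepList_append, hu, hv]⟩

theorem aux_reach_run (M : DBA Q A) (q : Q) (w : ℕ → A) {m n : ℕ} (h : m ≤ n) :
    M.Reach (M.runFrom q w m) (M.runFrom q w n) := by
  obtain ⟨k, rfl⟩ := Nat.exists_eq_add_of_le h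
  clear h
  induction k with
  | zero => exact ⟨[], rfl⟩
  | succ k ih => exact aux_reach_trans M ih ⟨[w (m + k)], rfl⟩

theorem aux_trap_reach (M : DBA Q A) {T : Set Q} (hT : ∀ q a, q ∈ T → M.step q a ∈ T)
    {p q : Q} (hp : p ∈ T) (h : M.Reach p q) : q ∈ T := by
  obtain ⟨u, rfl⟩ := h
  induction u generalizing p with
  | nil => exact hp
  | cons a u ih => exact ih (hT _ _ hp)

theorem aux_weak_of_trap (M : DBA Q A) (hT : ∀ q a, q ∈ M.F → M.step q a ∈ M.F) : M.Weak :=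
  fun _ _ hscc =>
    ⟨fun h => aux_trap_reach M hT h hscc.1, fun h => aux_trap_reach M hT h hscc.2⟩

theorem aux_weak_of_trap_compl (M : DBA Q A)
    (hT : ∀ q a, q ∉ M.F → M.step q a ∉ M.F) : M.Weak := by
  intro p q hscc
  constructor
  · intro h
    by_contra hq
    exact aux_trap_reach (T := M.Fᶜ) M hT hq hscc.2 h
  · intro h
    by_contra hp
    exact aux_trap_reach (T := M.Fᶜ) M hT hp hscc.1 h

theorem aux_trap_run (M : DBA Q A) {T : Set Q} (hT : ∀ q a, q ∈ T → M.step q a ∈ T)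
    (q : Q) (w : ℕ → A) {n m : ℕ} (h : M.runFrom q w n ∈ T) (hnm : n ≤ m) :
    M.runFrom q w m ∈ T := aux_trap_reach M hT h (aux_reach_run M q w hnm)

theorem aux_acceptsFrom_iff_exists (M : DBA Q A)
    (hT : ∀ q a, q ∈ M.F → M.step q a ∈ M.F) (q : Q) (w : ℕ → A) :
    M.AcceptsFrom q w ↔ ∃ n, M.runFrom q w n ∈ M.F := by
  constructor
  · intro h; obtain ⟨n, _, hn⟩ := h 0; exact ⟨n, hn⟩
  · rintro ⟨n, hn⟩ N
    exact ⟨max n N, le_max_right _ _, aux_trap_run M hT q w hn (le_max_left _ _)⟩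

theorem aux_acceptsFrom_iff_forall (M : DBA Q A)
    (hT : ∀ q a, q ∉ M.F → M.step q a ∉ M.F) (q : Q) (w : ℕ → A) :
    M.AcceptsFrom q w ↔ ∀ n, M.runFrom q w n ∈ M.F := by
  constructor
  · intro h n
    by_contra hn
    obtain ⟨m, hm, hmF⟩ := h n
    exact aux_trap_run (T := M.Fᶜ) M hT q w hn hm hmF
  · intro h N; exact ⟨N, le_refl N, h N⟩

theorem aux_runFrom_congr (M : DBA Q A) (q : Q) {w v : ℕ → A} (n : ℕ)
    (h : ∀ k < n, w k = v k) : M.runFrom q w n = M.runFrom q v n := by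
  induction n with
  | zero => rfl
  | succ n ih =>
    show M.step (M.runFrom q w n) (w n) = M.step (M.runFrom q v n) (v n)
    rw [ih (fun k hk => h k (Nat.lt_succ_of_lt hk)), h n (Nat.lt_succ_self n)]

theorem aux_runFrom_F_irrel (M : DBA Q A) (F' : Set Q) (q : Q) (w : ℕ → A) (n : ℕ) :
    (DBA.mk M.init M.step F').runFrom q w n = M.runFrom q w n := by
  induction n with
  | zero => rfl
  | succ n ih =>
    show (DBA.mk M.init M.step F').step _ (w n) = M.step (M.runFrom q w n) (w n)
    rw [ih]

theorem aux_stepList_F_irrel (M : DBA Q A) (F' : Set Q) (q : Q) (u : List A) :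
    (DBA.mk M.init M.step F').stepList q u = M.stepList q u := by
  induction u generalizing q with
  | nil => rfl
  | cons a u ih => exact ih _

theorem aux_sameSCC_F_irrel (M : DBA Q A) (F' : Set Q) (p q : Q) :
    (DBA.mk M.init M.step F').SameSCC p q ↔ M.SameSCC p q := by
  unfold DBA.SameSCC DBA.Reach
  simp only [aux_stepList_F_irrel]

/- ### Pigeonhole and complement for weak automata -/

theorem aux_pigeonhole [Fintype Q] (r : ℕ → Q) (P : Set Q)
    (h : ∀ N, ∃ n, N ≤ n ∧ r n ∈ P) : ∃ p, p ∈ P ∧ ∀ N, ∃ n, N ≤ n ∧ r n = p := by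
  by_contra hc
  push_neg at hc
  classical
  choose! N hN using hc
  obtain ⟨n, hn, hnP⟩ := h (Finset.univ.sup N)
  exact hN (r n) hnP n (le_trans (Finset.le_sup (Finset.mem_univ _)) hn) rfl

theorem aux_weak_not_both [Fintype Q] (M : DBA Q A) (hw : M.Weak)
    (q : Q) (w : ℕ → A) (h1 : M.AcceptsFrom q w)
    (h2 : ∀ N, ∃ n, N ≤ n ∧ M.runFrom q w n ∉ M.F) : False := by
  obtain ⟨p, hpF, hp⟩ := aux_pigeonhole (M.runFrom q w) M.F h1
  obtain ⟨p', hp'F, hp'⟩ := aux_pigeonhole (M.runFrom q w) M.Fᶜ h2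
  obtain ⟨n1, -, e1⟩ := hp 0
  obtain ⟨n2, hn2, e2⟩ := hp' n1
  obtain ⟨n3, hn3, e3⟩ := hp n2
  have r1 : M.Reach p p' := by rw [← e1, ← e2]; exact aux_reach_run M q w hn2
  have r2 : M.Reach p' p := by rw [← e2, ← e3]; exact aux_reach_run M q w hn3
  exact hp'F ((hw p p' ⟨r1, r2⟩).mp hpF)

theorem aux_not_accepts_iff [Fintype Q] (M : DBA Q A) (hw : M.Weak) (q : Q) (w : ℕ → A) :
    ¬ M.AcceptsFrom q w ↔ ∀ N, ∃ n, N ≤ n ∧ M.runFrom q w n ∉ M.F := by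
  constructor
  · intro h N
    by_contra hc
    push_neg at hc
    exact h fun N' => ⟨max N N', le_max_right _ _, hc _ (le_max_left _ _)⟩
  · intro h hacc
    exact aux_weak_not_both M hw q w hacc h

theorem aux_dwa_compl {A : Type} {L : Set (ℕ → A)} (h : DWARecognizable L) :
    DWARecognizable Lᶜ := by
  obtain ⟨Q, hQ, M, hweak, hacc⟩ := h
  haveI := hQ
  refine ⟨Q, hQ, ⟨M.init, M.step, M.Fᶜ⟩, ?_, fun w => ?_⟩
  · intro p q hscc
    rw [aux_sameSCC_F_irrel] at hscc
    exact not_congr (hweak p q hscc)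
  · have key : (DBA.mk M.init M.step M.Fᶜ).Accepts w ↔ ¬ M.Accepts w := by
      rw [DBA.Accepts, DBA.Accepts, aux_not_accepts_iff M hweak M.init w]
      constructor
      · intro h N
        obtain ⟨n, hn, hnF⟩ := h N
        exact ⟨n, hn, by rwa [aux_runFrom_F_irrel] at hnF⟩
      · intro h N
        obtain ⟨n, hn, hnF⟩ := h N
        exact ⟨n, hn, by rw [aux_runFrom_F_irrel]; exact hnF⟩
    rw [key, hacc w, Set.mem_compl_iff]

/- ### Union via products -/

theorem aux_prod_stepList {Q₂ : Type} (M₁ : DBA Q A) (M₂ : DBA Q₂ A)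
    (Fp : Set (Q × Q₂)) (p : Q) (q : Q₂) (u : List A) :
    (M₁.prod M₂ Fp).stepList (p, q) u = (M₁.stepList p u, M₂.stepList q u) := by
  induction u generalizing p q with
  | nil => rfl
  | cons a u ih => exact ih _ _

theorem aux_prod_runFrom {Q₂ : Type} (M₁ : DBA Q A) (M₂ : DBA Q₂ A)
    (Fp : Set (Q × Q₂)) (p : Q) (q : Q₂) (w : ℕ → A) (n : ℕ) :
    (M₁.prod M₂ Fp).runFrom (p, q) w n = (M₁.runFrom p w n, M₂.runFrom q w n) := by
  induction n with
  | zero => rfl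
  | succ n ih =>
    show (M₁.prod M₂ Fp).step _ (w n) = _
    rw [ih]
    rfl

theorem aux_dwa_union {A : Type} {L₁ L₂ : Set (ℕ → A)} (h1 : DWARecognizable L₁)
    (h2 : DWARecognizable L₂) : DWARecognizable (L₁ ∪ L₂) := by
  obtain ⟨Q₁, hQ₁, M₁, hw₁, ha₁⟩ := h1
  obtain ⟨Q₂, hQ₂, M₂, hw₂, ha₂⟩ := h2
  haveI := hQ₁; haveI := hQ₂
  set Fp : Set (Q₁ × Q₂) := {x | x.1 ∈ M₁.F ∨ x.2 ∈ M₂.F} with hFp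
  refine ⟨Q₁ × Q₂, inferInstance, M₁.prod M₂ Fp, ?_, fun w => ?_⟩
  · rintro ⟨p1, p2⟩ ⟨q1, q2⟩ ⟨⟨u, hu⟩, ⟨v, hv⟩⟩
    rw [aux_prod_stepList] at hu hv
    have s1 : M₁.SameSCC p1 q1 :=
      ⟨⟨u, congrArg Prod.fst hu⟩, ⟨v, congrArg Prod.fst hv⟩⟩
    have s2 : M₂.SameSCC p2 q2 :=
      ⟨⟨u, congrArg Prod.snd hu⟩, ⟨v, congrArg Prod.snd hv⟩⟩
    exact or_congr (hw₁ _ _ s1) (hw₂ _ _ s2)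
  · have key : (M₁.prod M₂ Fp).Accepts w ↔ M₁.Accepts w ∨ M₂.Accepts w := by
      constructor
      · intro h
        by_contra hc
        push_neg at hc
        obtain ⟨hc1, hc2⟩ := hc
        unfold DBA.Accepts DBA.AcceptsFrom at hc1 hc2
        push_neg at hc1 hc2
        obtain ⟨N1, hN1⟩ := hc1
        obtain ⟨N2, hN2⟩ := hc2
        obtain ⟨n, hn, hnF⟩ := h (max N1 N2)
        rw [show (M₁.prod M₂ Fp).runFrom (M₁.prod M₂ Fp).init w n
            = (M₁.runFrom M₁.init w n, M₂.runFrom M₂.init w n) from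
          aux_prod_runFrom M₁ M₂ Fp M₁.init M₂.init w n] at hnF
        rcases hnF with h' | h'
        · exact hN1 n (le_trans (le_max_left _ _) hn) h'
        · exact hN2 n (le_trans (le_max_right _ _) hn) h'
      · intro h N
        rcases h with h | h
        · obtain ⟨n, hn, hF⟩ := h N
          exact ⟨n, hn, by rw [show (M₁.prod M₂ Fp).runFrom (M₁.prod M₂ Fp).init w n
              = (M₁.runFrom M₁.init w n, M₂.runFrom M₂.init w n) from
            aux_prod_runFrom M₁ M₂ Fp M₁.init M₂.init w n]; exact Or.inl hF⟩
        · obtain ⟨n, hn, hF⟩ := h N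
          exact ⟨n, hn, by rw [show (M₁.prod M₂ Fp).runFrom (M₁.prod M₂ Fp).init w n
              = (M₁.runFrom M₁.init w n, M₂.runFrom M₂.init w n) from
            aux_prod_runFrom M₁ M₂ Fp M₁.init M₂.init w n]; exact Or.inr hF⟩
    rw [key, ha₁ w, ha₂ w]
    rfl

theorem aux_dwa_inter {A : Type} {L₁ L₂ : Set (ℕ → A)} (h1 : DWARecognizable L₁)
    (h2 : DWARecognizable L₂) : DWARecognizable (L₁ ∩ L₂) := by
  have h := aux_dwa_compl (aux_dwa_union (aux_dwa_compl h1) (aux_dwa_compl h2))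
  rwa [Set.compl_union, compl_compl, compl_compl] at h

/- ### Subset construction from an NBA -/

def AuxNAcceptsFrom (M : NBA Q A) (S : Set Q) (w : ℕ → A) : Prop :=
  ∃ r : ℕ → Q, r 0 ∈ S ∧ (∀ n, r (n + 1) ∈ M.step (r n) (w n)) ∧
    ∀ N, ∃ n, N ≤ n ∧ r n ∈ M.F

def auxStepSet (M : NBA Q A) (S : Set Q) (a : A) : Set Q :=
  {q' | ∃ q ∈ S, q' ∈ M.step q a}

def auxCons {α : Type} (a : α) (w : ℕ → α) : ℕ → α :=
  fun n => match n with | 0 => a | k + 1 => w k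

def auxShift {α : Type} (n : ℕ) (w : ℕ → α) : ℕ → α := fun k => w (n + k)

theorem aux_nAcc_cons (M : NBA Q A) (S : Set Q) (a : A) (w : ℕ → A) :
    AuxNAcceptsFrom M S (auxCons a w) ↔ AuxNAcceptsFrom M (auxStepSet M S a) w := by
  constructor
  · rintro ⟨r, h0, hs, hF⟩
    refine ⟨fun n => r (n + 1), ⟨r 0, h0, hs 0⟩, fun n => hs (n + 1), fun N => ?_⟩
    obtain ⟨n, hn, hF'⟩ := hF (N + 1)
    refine ⟨n - 1, by omega, ?_⟩
    show r (n - 1 + 1) ∈ M.F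
    have e : n - 1 + 1 = n := by omega
    rw [e]
    exact hF'
  · rintro ⟨r, h0, hs, hF⟩
    obtain ⟨q, hq, hq0⟩ := h0
    refine ⟨auxCons q r, hq, fun n => ?_, fun N => ?_⟩
    · cases n with
      | zero => exact hq0
      | succ k => exact hs k
    · obtain ⟨n, hn, hF'⟩ := hF N
      exact ⟨n + 1, by omega, hF'⟩

def auxDet (M : NBA Q A) (Fd : Set (Set Q)) : DBA (Set Q) A :=
  ⟨M.init, auxStepSet M, Fd⟩

theorem aux_shift_zero {α : Type} (w : ℕ → α) : auxShift 0 w = w := by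
  funext k
  show w (0 + k) = w k
  rw [Nat.zero_add]

theorem aux_shift_succ {α : Type} (n : ℕ) (w : ℕ → α) :
    auxShift n w = auxCons (w n) (auxShift (n + 1) w) := by
  funext k
  cases k with
  | zero => rfl
  | succ k =>
    show w (n + (k + 1)) = w (n + 1 + k)
    congr 1
    omega

theorem aux_nAcc_run (M : NBA Q A) (Fd : Set (Set Q)) (S : Set Q) (w : ℕ → A) (n : ℕ) :
    AuxNAcceptsFrom M S w ↔
      AuxNAcceptsFrom M ((auxDet M Fd).runFrom S w n) (auxShift n w) := by
  induction n with
  | zero => rw [aux_shift_zero]; rfl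
  | succ n ih =>
    rw [ih, aux_shift_succ, aux_nAcc_cons]
    rfl

def auxSplice {α : Type} (n : ℕ) (w w' : ℕ → α) : ℕ → α :=
  fun k => if k < n then w k else w' (k - n)

theorem aux_shift_splice {α : Type} (n : ℕ) (w w' : ℕ → α) :
    auxShift n (auxSplice n w w') = w' := by
  funext k
  show (if n + k < n then w (n + k) else w' (n + k - n)) = w' k
  rw [if_neg (by omega)]
  congr 1
  omega

theorem aux_splice_shift {α : Type} (n : ℕ) (w : ℕ → α) :
    auxSplice n w (auxShift n w) = w := by
  funext k
  show (if k < n then w k else w (n + (k - n))) = w k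
  split
  · rfl
  · congr 1; omega

theorem aux_prefix_splice {α : Type} (n : ℕ) (w w' : ℕ → α) :
    (List.ofFn fun i : Fin n => auxSplice n w w' i) = (List.ofFn fun i : Fin n => w i) := by
  congr 1
  funext i
  exact if_pos i.isLt

theorem aux_key (M : NBA Q A) (Fd : Set (Set Q)) (w w' : ℕ → A) (n : ℕ) :
    AuxNAcceptsFrom M ((auxDet M Fd).runFrom M.init w n) w' ↔
      M.Accepts (auxSplice n w w') := by
  have h1 : (auxDet M Fd).runFrom M.init w n
      = (auxDet M Fd).runFrom M.init (auxSplice n w w') n :=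
    aux_runFrom_congr _ _ n (fun k hk => (if_pos hk).symm)
  rw [h1]
  constructor
  · intro h
    exact (aux_nAcc_run M Fd M.init (auxSplice n w w') n).mpr
      (by rwa [aux_shift_splice])
  · intro h
    have h2 := (aux_nAcc_run M Fd M.init (auxSplice n w w') n).mp h
    rwa [aux_shift_splice] at h2

theorem aux_dwa_guarantee {A : Type} {L : Set (ℕ → A)}
    (hg : IsGuaranteeLang L) (hr : OmegaRegular L) : DWARecognizable L := by
  obtain ⟨W, hW⟩ := hg
  obtain ⟨Q, hQ, M, hM⟩ := hr
  haveI := hQ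
  haveI : Fintype (Set Q) := Fintype.ofFinite _
  set Fd : Set (Set Q) := {S | ∀ w', AuxNAcceptsFrom M S w'} with hFd
  have trap : ∀ (S : Set Q) a, S ∈ (auxDet M Fd).F → (auxDet M Fd).step S a ∈ (auxDet M Fd).F :=
    fun S a hS w' => (aux_nAcc_cons M S a w').mp (hS (auxCons a w'))
  refine ⟨Set Q, inferInstance, auxDet M Fd, aux_weak_of_trap _ trap, fun w => ?_⟩
  rw [DBA.Accepts, aux_acceptsFrom_iff_exists _ trap]
  constructor
  · rintro ⟨n, hn⟩
    have h := (aux_key M Fd w (auxShift n w) n).mp (hn (auxShift n w))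
    rw [aux_splice_shift] at h
    exact (hM w).mp h
  · intro hw
    rw [hW] at hw
    obtain ⟨n, hn⟩ := hw
    refine ⟨n, fun w' => ?_⟩
    apply (aux_key M Fd w w' n).mpr
    rw [hM, hW]
    exact ⟨n, by rw [aux_prefix_splice]; exact hn⟩

theorem aux_dwa_safety {A : Type} {L : Set (ℕ → A)}
    (hs : IsSafetyLang L) (hr : OmegaRegular L) : DWARecognizable L := by
  obtain ⟨W, hW⟩ := hs
  obtain ⟨Q, hQ, M, hM⟩ := hr
  haveI := hQ
  haveI : Fintype (Set Q) := Fintype.ofFinite _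
  set Fd : Set (Set Q) := {S | ∃ w', AuxNAcceptsFrom M S w'} with hFd
  have trapc : ∀ (S : Set Q) a, S ∉ (auxDet M Fd).F →
      (auxDet M Fd).step S a ∉ (auxDet M Fd).F := by
    rintro S a hS ⟨w', hw'⟩
    exact hS ⟨auxCons a w', (aux_nAcc_cons M S a w').mpr hw'⟩
  refine ⟨Set Q, inferInstance, auxDet M Fd, aux_weak_of_trap_compl _ trapc, fun w => ?_⟩
  rw [DBA.Accepts, aux_acceptsFrom_iff_forall _ trapc]
  constructor
  · intro h
    by_contra hw
    have hw' : w ∈ Lᶜ := hw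
    rw [hW] at hw'
    obtain ⟨n, hn⟩ := hw'
    obtain ⟨w', hacc⟩ := h n
    have h1 := (hM _).mp ((aux_key M Fd w w' n).mp hacc)
    have h2 : auxSplice n w w' ∈ Lᶜ := by
      rw [hW]
      exact ⟨n, by rw [aux_prefix_splice]; exact hn⟩
    exact h2 h1
  · intro hw n
    refine ⟨auxShift n w, (aux_key M Fd w (auxShift n w) n).mpr ?_⟩
    rw [aux_splice_shift]
    exact (hM w).mpr hw

end AuxStmt11

/-- every obligation language — a finite Boolean combination of
ω-regular safety and guarantee languages — is recognized by a deterministic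
weak Büchi automaton. -/
theorem stmt11 {A : Type} [Fintype A] (L : Set (ℕ → A))
    (h : BoolCombOf
      {L' : Set (ℕ → A) | (IsGuaranteeLang L' ∨ IsSafetyLang L') ∧ OmegaRegular L'} L) :
    DWARecognizable L := by
  induction h with
  | @base L' hB =>
    obtain ⟨hgs, hr⟩ := hB
    rcases hgs with hg | hs
    · exact aux_dwa_guarantee hg hr
    · exact aux_dwa_safety hs hr
  | compl _ ih => exact aux_dwa_compl ih
  | union _ _ ih1 ih2 => exact aux_dwa_union ih1 ih2
  | inter _ _ ih1 ih2 => exact aux_dwa_inter ih1 ih2
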